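/- Let d be a squarefree integer with d ≠ 0, 1, K = ℚ(√d), p > 3 a prime, and A, B, C nonzero pth-powerfree integers. Suppose (x, y, z) ∈ K³ is a nontrivial solution of A x^p + B y^p + C z^p = 0 (i.e., xyz ≠ 0) such that y = γ x for some rational number γ. Then there exist nonzero, pairwise coprime integers a, b, c with A a^p + B b^p + C c^p = 0. -/

import Mathlib

-- conjugate powers
lemma stmt12_conj_pow {K : Type*} [Field K] [CharZero K] (d : ℤ) (s : K) (hs : s ^ 2 = (d : K))
    (a b : ℚ) (n : ℕ) :
    ∃ P Q : ℚ, ((a : K) + b * s) ^ n = P + Q * s ∧ ((a : K) - b * s) ^ n = P - Q * s := by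
  induction n with
  | zero => exact ⟨1, 0, by push_cast; ring, by push_cast; ring⟩
  | succ n ih =>
    obtain ⟨P, Q, h1, h2⟩ := ih
    refine ⟨P * a + Q * b * d, P * b + Q * a, ?_, ?_⟩
    · have : ((a : K) + b * s) ^ (n + 1) = ((P : K) + Q * s) * ((a : K) + b * s) := by
        rw [pow_succ, h1]
      rw [this]
      push_cast
      linear_combination ((Q : K) * b) * hs
    · have : ((a : K) - b * s) ^ (n + 1) = ((P : K) - Q * s) * ((a : K) - b * s) := by
        rw [pow_succ, h2]
      rw [this]
      push_cast
      linear_combination ((Q : K) * b) * hs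

lemma stmt12_irrat {K : Type*} [Field K] [CharZero K] {d : ℤ} (hd : Squarefree d)
    (hd1 : d ≠ 1) {s : K} (hs : s ^ 2 = (d : K)) (q : ℚ) : (q : K) ≠ s := by
  intro h
  have h2 : (q : K) ^ 2 = (d : K) := by rw [h, hs]
  have h3 : q ^ 2 = (d : ℚ) := by exact_mod_cast h2
  have hden : (q * q).den = 1 := by
    have : q * q = (d : ℚ) := by rw [← sq]; exact h3
    rw [this]; simp
  have hden1 : q.den = 1 := by
    have h5 := Rat.mul_self_den q
    rw [hden] at h5
    nlinarith [q.den_pos]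
  have hq : (q.num : ℚ) = q := by
    conv_rhs => rw [← Rat.num_div_den q]
    rw [hden1]; push_cast; ring
  have h4 : q.num ^ 2 = d := by
    have : ((q.num : ℚ)) ^ 2 = (d : ℚ) := by rw [hq]; exact h3
    exact_mod_cast this
  have : IsUnit q.num := hd q.num (by rw [← h4]; ring_nf; exact dvd_refl _)
  have := Int.isUnit_iff.mp this
  rcases this with h5 | h5 <;> rw [h5] at h4 <;> simp at h4 <;> omega

lemma stmt12_uniq {K : Type*} [Field K] [CharZero K] {d : ℤ} (hd : Squarefree d)
    (hd1 : d ≠ 1) {s : K} (hs : s ^ 2 = (d : K)) {a b c e : ℚ}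
    (h : (a : K) + b * s = (c : K) + e * s) : a = c ∧ b = e := by
  have hbe : b = e := by
    by_contra hne
    have hne' : ((e - b : ℚ) : K) ≠ 0 := by
      exact_mod_cast sub_ne_zero.mpr (Ne.symm hne)
    have h1 : ((e - b : ℚ) : K) * s = ((a - c : ℚ) : K) := by push_cast; linear_combination -h
    have h2 : (((a - c) / (e - b) : ℚ) : K) = s := by
      rw [Rat.cast_div, div_eq_iff hne', ← h1]; ring
    exact stmt12_irrat hd hd1 hs _ h2
  refine ⟨?_, hbe⟩
  have h3 : (a : K) = (c : K) := by rw [hbe] at h; exact add_right_cancel h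
  exact_mod_cast h3

open Polynomial in
lemma stmt12_rat {K : Type*} [Field K] [CharZero K] {d : ℤ} (hd : Squarefree d)
    (hd0 : d ≠ 0) (hd1 : d ≠ 1) {s : K} (hs : s ^ 2 = (d : K))
    (hgen : ∀ w : K, ∃ a b : ℚ, w = (a : K) + (b : K) * s)
    {p : ℕ} (hp : p.Prime) (hp3 : 3 < p)
    {w : K} (hw : w ≠ 0) {r : ℚ} (hr : w ^ p = (r : K)) : ∃ δ : ℚ, w = (δ : K) := by
  obtain ⟨a, b, hab⟩ := hgen w
  by_cases hb : b = 0
  · exact ⟨a, by rw [hab, hb]; push_cast; ring⟩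
  exfalso
  have hs0 : s ≠ 0 := by
    intro h0
    rw [h0] at hs
    exact hd0 (by exact_mod_cast hs.symm)
  obtain ⟨P, Q, h1, h2⟩ := stmt12_conj_pow d s hs a b p
  have hrPQ : (r : K) + (0 : ℚ) * s = (P : K) + Q * s := by
    rw [← hab] at h1; rw [← hr, h1]; push_cast; ring
  obtain ⟨hrP, hQ0⟩ := stmt12_uniq hd hd1 hs hrPQ
  set w' : K := (a : K) - b * s with hw'
  have hw'p : w' ^ p = (r : K) := by rw [h2, hrP, ← hQ0]; push_cast; ring
  have hr0 : (r : K) ≠ 0 := by rw [← hr]; exact pow_ne_zero p hw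
  have hw'0 : w' ≠ 0 := by
    intro h0; rw [h0, zero_pow hp.ne_zero] at hw'p; exact hr0 hw'p.symm
  set ζ : K := w * w'⁻¹ with hζ
  have hζp : ζ ^ p = 1 := by
    rw [hζ, mul_pow, inv_pow, hr, hw'p]
    exact mul_inv_cancel₀ hr0
  have hζ1 : ζ ≠ 1 := by
    intro h0
    rw [hζ, mul_inv_eq_one₀ hw'0] at h0
    rw [hab, hw'] at h0
    have hbs : (b : K) * s = 0 := by linear_combination h0 / 2
    rcases mul_eq_zero.mp hbs with h | h
    · exact hb (by exact_mod_cast h)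
    · exact hs0 h
  haveI : Fact p.Prime := ⟨hp⟩
  have horder : orderOf ζ = p := orderOf_eq_prime hζp hζ1
  have hprim : IsPrimitiveRoot ζ p := horder ▸ IsPrimitiveRoot.orderOf ζ
  have hmin : cyclotomic p ℚ = minpoly ℚ ζ := cyclotomic_eq_minpoly_rat hprim hp.pos
  -- quadratic polynomial annihilating ζ
  obtain ⟨u, v, huv⟩ := hgen ζ
  set qp : ℚ[X] := X ^ 2 - (C (2 * u) * X + C (v ^ 2 * d - u ^ 2)) with hqp
  have hqmonic : qp.Monic := monic_X_pow_sub (by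
    apply lt_of_le_of_lt (degree_linear_le)
    norm_num)
  have haeval : aeval ζ qp = 0 := by
    rw [hqp]
    simp only [map_sub, map_add, map_mul, map_pow, aeval_X, aeval_C]
    simp only [eq_ratCast]
    rw [huv]
    push_cast
    linear_combination (v : K) ^ 2 * hs
  have hdvd : minpoly ℚ ζ ∣ qp := minpoly.dvd ℚ ζ haeval
  have hdeg : (minpoly ℚ ζ).natDegree ≤ qp.natDegree :=
    natDegree_le_of_dvd hdvd hqmonic.ne_zero
  have hqdeg : qp.natDegree ≤ 2 := by
    rw [hqp]
    apply le_trans (natDegree_sub_le _ _)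
    simp only [natDegree_X_pow]
    apply max_le (le_refl 2)
    apply le_trans (natDegree_add_le _ _)
    apply max_le
    · apply le_trans (natDegree_mul_le)
      simp only [natDegree_C, natDegree_X]
      omega
    · exact (natDegree_C _).le.trans (by norm_num)
  have hcyc : (minpoly ℚ ζ).natDegree = p - 1 := by
    rw [← hmin, natDegree_cyclotomic, Nat.totient_prime hp]
  omega

lemma stmt12_key {p : ℕ} {A B C q a b c : ℤ}
    (hCpf : ∀ q : ℤ, Prime q → ¬ q ^ p ∣ C) (hq : Prime q)
    (ha : q ∣ a) (hb : q ∣ b)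
    (heq : A * a ^ p + B * b ^ p + C * c ^ p = 0) : q ∣ c := by
  by_contra h
  have hcop : IsCoprime q c := (hq.coprime_iff_not_dvd).mpr h
  have hdvd : q ^ p ∣ C * c ^ p := by
    have h1 : C * c ^ p = -(A * a ^ p) - B * b ^ p := by linarith
    have h2 : q ^ p ∣ A * a ^ p := Dvd.dvd.mul_left (pow_dvd_pow_of_dvd ha p) A
    have h3 : q ^ p ∣ B * b ^ p := Dvd.dvd.mul_left (pow_dvd_pow_of_dvd hb p) B
    rw [h1]
    exact dvd_sub (dvd_neg.mpr h2) h3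
  exact hCpf q hq ((hcop.pow).dvd_of_dvd_mul_right hdvd)

lemma stmt12_shrink {p : ℕ} (hp : p.Prime) {A B C : ℤ}
    (hApf : ∀ q : ℤ, Prime q → ¬ q ^ p ∣ A)
    (hBpf : ∀ q : ℤ, Prime q → ¬ q ^ p ∣ B)
    (hCpf : ∀ q : ℤ, Prime q → ¬ q ^ p ∣ C)
    {a b c : ℤ} (ha : a ≠ 0) (hb : b ≠ 0) (hc : c ≠ 0)
    (heq : A * a ^ p + B * b ^ p + C * c ^ p = 0)
    (hnc : ¬(IsCoprime a b ∧ IsCoprime a c ∧ IsCoprime b c)) :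
    ∃ a' b' c' : ℤ, a' ≠ 0 ∧ b' ≠ 0 ∧ c' ≠ 0 ∧
      A * a' ^ p + B * b' ^ p + C * c' ^ p = 0 ∧
      a'.natAbs + b'.natAbs + c'.natAbs < a.natAbs + b.natAbs + c.natAbs := by
  have hqall : ∃ q : ℤ, Prime q ∧ q ∣ a ∧ q ∣ b ∧ q ∣ c := by
    have getq : ∀ u v : ℤ, u ≠ 0 → ¬ IsCoprime u v → ∃ q : ℤ, Prime q ∧ q ∣ u ∧ q ∣ v := by
      intro u v hu huv
      rw [Int.isCoprime_iff_gcd_eq_one] at huv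
      obtain ⟨q, hq, hdvd⟩ := Int.exists_prime_and_dvd (n := (Int.gcd u v : ℤ))
        (by simpa using huv)
      exact ⟨q, hq, hdvd.trans (Int.gcd_dvd_left u v), hdvd.trans (Int.gcd_dvd_right u v)⟩
    by_cases hab : IsCoprime a b
    · by_cases hac : IsCoprime a c
      · obtain ⟨q, hq, h1, h2⟩ := getq b c hb (fun h => hnc ⟨hab, hac, h⟩)
        exact ⟨q, hq, stmt12_key (A := B) (B := C) (C := A) hApf hq h1 h2 (by linarith), h1, h2⟩
      · obtain ⟨q, hq, h1, h2⟩ := getq a c ha hac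
        exact ⟨q, hq, h1, stmt12_key (A := A) (B := C) (C := B) hBpf hq h1 h2 (by linarith), h2⟩
    · obtain ⟨q, hq, h1, h2⟩ := getq a b ha hab
      exact ⟨q, hq, h1, h2, stmt12_key hCpf hq h1 h2 heq⟩
  obtain ⟨q, hq, ⟨a', rfl⟩, ⟨b', rfl⟩, ⟨c', rfl⟩⟩ := hqall
  have hq0 : q ≠ 0 := hq.ne_zero
  have ha' : a' ≠ 0 := by rintro rfl; simp at ha
  have hb' : b' ≠ 0 := by rintro rfl; simp at hb
  have hc' : c' ≠ 0 := by rintro rfl; simp at hc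
  have heq' : A * a' ^ p + B * b' ^ p + C * c' ^ p = 0 := by
    have h1 : q ^ p * (A * a' ^ p + B * b' ^ p + C * c' ^ p) = 0 := by
      rw [← heq]; ring
    exact (mul_eq_zero.mp h1).resolve_left (pow_ne_zero p hq0)
  refine ⟨a', b', c', ha', hb', hc', heq', ?_⟩
  have hq2 : 2 ≤ q.natAbs := (Int.prime_iff_natAbs_prime.mp hq).two_le
  have l : ∀ u : ℤ, u ≠ 0 → u.natAbs < (q * u).natAbs := by
    intro u hu
    rw [Int.natAbs_mul]
    have : 1 ≤ u.natAbs := Int.natAbs_pos.mpr hu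
    nlinarith
  have := l a' ha'; have := l b' hb'; have := l c' hc'
  omega

lemma stmt12_descent {p : ℕ} (hp : p.Prime) {A B C : ℤ}
    (hApf : ∀ q : ℤ, Prime q → ¬ q ^ p ∣ A)
    (hBpf : ∀ q : ℤ, Prime q → ¬ q ^ p ∣ B)
    (hCpf : ∀ q : ℤ, Prime q → ¬ q ^ p ∣ C) :
    ∀ n : ℕ, ∀ a b c : ℤ, a ≠ 0 → b ≠ 0 → c ≠ 0 →
      a.natAbs + b.natAbs + c.natAbs ≤ n →
      A * a ^ p + B * b ^ p + C * c ^ p = 0 →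
      ∃ a b c : ℤ, a ≠ 0 ∧ b ≠ 0 ∧ c ≠ 0 ∧
        IsCoprime a b ∧ IsCoprime a c ∧ IsCoprime b c ∧
        A * a ^ p + B * b ^ p + C * c ^ p = 0 := by
  intro n
  induction n using Nat.strong_induction_on with
  | _ n ih =>
    intro a b c ha hb hc hn heq
    by_cases hco : IsCoprime a b ∧ IsCoprime a c ∧ IsCoprime b c
    · exact ⟨a, b, c, ha, hb, hc, hco.1, hco.2.1, hco.2.2, heq⟩
    · obtain ⟨a', b', c', ha', hb', hc', heq', hlt⟩ :=
        stmt12_shrink hp hApf hBpf hCpf ha hb hc heq hco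
      exact ih (a'.natAbs + b'.natAbs + c'.natAbs) (lt_of_lt_of_le hlt hn)
        a' b' c' ha' hb' hc' le_rfl heq'

/-- Let `d` be a squarefree integer with `d ≠ 0, 1`, `K = ℚ(√d)`, `p > 3` a prime, and
`A, B, C` nonzero `p`th-powerfree integers.  Suppose `(x, y, z) ∈ K³` is a nontrivial
solution of `A x^p + B y^p + C z^p = 0` (i.e. `xyz ≠ 0`) such that `y = γ x` for some
rational number `γ`.  Then there exist nonzero, pairwise coprime integers `a, b, c` with
`A a^p + B b^p + C c^p = 0`.  Here `K` is realized as a field of characteristic zero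
generated over `ℚ` by a square root `s` of `d`, and an integer `A` is `p`th-powerfree if
`q^p ∤ A` for every prime `q`. -/
theorem stmt_12 (d : ℤ) (hd : Squarefree d) (hd0 : d ≠ 0) (hd1 : d ≠ 1)
    (K : Type*) [Field K] [CharZero K] (s : K) (hs : s ^ 2 = (d : K))
    (hgen : ∀ w : K, ∃ a b : ℚ, w = (a : K) + (b : K) * s)
    (p : ℕ) (hp : p.Prime) (hp3 : 3 < p)
    (A B C : ℤ) (hA : A ≠ 0) (hB : B ≠ 0) (hC : C ≠ 0)
    (hApf : ∀ q : ℤ, Prime q → ¬ q ^ p ∣ A)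
    (hBpf : ∀ q : ℤ, Prime q → ¬ q ^ p ∣ B)
    (hCpf : ∀ q : ℤ, Prime q → ¬ q ^ p ∣ C)
    (x y z : K) (heq : (A : K) * x ^ p + (B : K) * y ^ p + (C : K) * z ^ p = 0)
    (hxyz : x * y * z ≠ 0)
    (γ : ℚ) (hγ : y = (γ : K) * x) :
    ∃ a b c : ℤ, a ≠ 0 ∧ b ≠ 0 ∧ c ≠ 0 ∧
      IsCoprime a b ∧ IsCoprime a c ∧ IsCoprime b c ∧
      A * a ^ p + B * b ^ p + C * c ^ p = 0 := by
  have hx : x ≠ 0 := fun h => hxyz (by rw [h]; ring)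
  have hy : y ≠ 0 := fun h => hxyz (by rw [h]; ring)
  have hz : z ≠ 0 := fun h => hxyz (by rw [h]; ring)
  have hγ0 : γ ≠ 0 := by
    rintro rfl; rw [hγ] at hy; simp at hy
  set w : K := z / x with hwdef
  have hw : w ≠ 0 := div_ne_zero hz hx
  have hzwx : z = w * x := by rw [hwdef, div_mul_cancel₀ _ hx]
  have hxp : x ^ p ≠ 0 := pow_ne_zero _ hx
  have heq2 : (A : K) + (B : K) * (γ : K) ^ p + (C : K) * w ^ p = 0 := by
    have h1 : x ^ p * ((A : K) + (B : K) * (γ : K) ^ p + (C : K) * w ^ p) = 0 := by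
      rw [hγ, hzwx] at heq
      rw [← heq]; ring
    exact (mul_eq_zero.mp h1).resolve_left hxp
  have hCK : (C : K) ≠ 0 := by exact_mod_cast (Int.cast_ne_zero (α := K)).mpr hC
  have hCQ : (C : ℚ) ≠ 0 := by exact_mod_cast hC
  have hwp : w ^ p = ((-(A + B * γ ^ p) / C : ℚ) : K) := by
    rw [Rat.cast_div, Rat.cast_neg, eq_div_iff (show ((C : ℚ) : K) ≠ 0 by exact_mod_cast hC)]
    push_cast
    linear_combination heq2
  obtain ⟨δ, hδ⟩ := stmt12_rat hd hd0 hd1 hs hgen hp hp3 hw hwp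
  have hδ0 : δ ≠ 0 := by rintro rfl; rw [hδ] at hw; simp at hw
  have hrat : (A : ℚ) + B * γ ^ p + C * δ ^ p = 0 := by
    have hK : ((A + B * γ ^ p + C * δ ^ p + 0 : ℚ) : K) = ((0 : ℚ) : K) := by
      push_cast
      rw [← hδ]
      linear_combination heq2
    have := Rat.cast_injective (α := K) hK
    linarith [this]
  have hγn : (γ.num : ℚ) = γ * γ.den :=
    (div_eq_iff (show ((γ.den : ℚ)) ≠ 0 by exact_mod_cast γ.den_ne_zero)).mp (Rat.num_div_den γ)
  have hδn : (δ.num : ℚ) = δ * δ.den :=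
    (div_eq_iff (show ((δ.den : ℚ)) ≠ 0 by exact_mod_cast δ.den_ne_zero)).mp (Rat.num_div_den δ)
  set a0 : ℤ := (γ.den : ℤ) * (δ.den : ℤ) with ha0def
  set b0 : ℤ := γ.num * (δ.den : ℤ) with hb0def
  set c0 : ℤ := δ.num * (γ.den : ℤ) with hc0def
  have ha0 : a0 ≠ 0 := mul_ne_zero (by exact_mod_cast γ.den_ne_zero) (by exact_mod_cast δ.den_ne_zero)
  have hb0 : b0 ≠ 0 := mul_ne_zero (Rat.num_ne_zero.mpr hγ0) (by exact_mod_cast δ.den_ne_zero)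
  have hc0 : c0 ≠ 0 := mul_ne_zero (Rat.num_ne_zero.mpr hδ0) (by exact_mod_cast γ.den_ne_zero)
  have heqZ : A * a0 ^ p + B * b0 ^ p + C * c0 ^ p = 0 := by
    have hQ : ((A * a0 ^ p + B * b0 ^ p + C * c0 ^ p : ℤ) : ℚ) = 0 := by
      push_cast [ha0def, hb0def, hc0def]
      rw [hγn, hδn]
      linear_combination (((γ.den : ℚ)) * δ.den) ^ p * hrat
    exact_mod_cast hQ
  exact stmt12_descent hp hApf hBpf hCpf (a0.natAbs + b0.natAbs + c0.natAbs)
    a0 b0 c0 ha0 hb0 hc0 le_rfl heqZ
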